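/- Let X₁ have double-truncated Rayleigh density on [m₁, m₂] as above, and X₂ be independent Rician with density p₂(x) = (x/σ₂²)e^{−(x²+μ²)/(2σ₂²)} I₀(xμ/σ₂²) on (0,∞). Then X = X₁X₂ has density p_X(x) = (x e^{−μ²/(2σ₂²)}/(2σ²)) ∑_{i=0}^∞ [Γ(−i, β₁; x²/(4σ²)) − Γ(−i, β₂; x²/(4σ²))] / (α · i! · i! · (2σ₂²σ²)^i) · (xμ/2)^{2i} for x ≥ 0, where σ = σ₁σ₂, β_j = m_j²/(2σ₁²), α = e^{−β₁} − e^{−β₂}, and I₀ is the modified Bessel function of the first kind of order 0. -/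

import Mathlib

open MeasureTheory Real

/-- Generalized incomplete gamma function `Γ(a, y; b) = ∫_y^∞ t^{a−1} e^{−t − b/t} dt`. -/
noncomputable def genGamma (a y b : ℝ) : ℝ :=
  ∫ t in Set.Ioi y, t ^ (a - 1) * Real.exp (-t - b / t)

/-- Modified Bessel function of the first kind of order zero,
`I₀(h) = ∑_{k=0}^∞ (h²/4)^k/(k!·k!)`. -/
noncomputable def besselI0 (h : ℝ) : ℝ :=
  ∑' k : ℕ, (h ^ 2 / 4) ^ k / ((k.factorial : ℝ) * (k.factorial : ℝ))

/- ------------------- auxiliary material ------------------- -/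

lemma besselI0_eq (h : ℝ) :
    besselI0 h = ∑' k : ℕ, (h ^ 2 / 4) ^ k / ((k.factorial : ℝ) * (k.factorial : ℝ)) := rfl

lemma psi_bound (k : ℕ) {b t : ℝ} (hb : 0 < b) (ht : 0 < t) :
    t ^ (-(k : ℝ) - 1) * Real.exp (-t - b / t)
      ≤ (((k + 1).factorial : ℝ) / b ^ (k + 1)) * Real.exp (-t) := by
  have h1 : t ^ (-(k : ℝ) - 1) = (t ^ (k + 1 : ℕ))⁻¹ := by
    rw [show (-(k : ℝ) - 1) = -((k + 1 : ℕ) : ℝ) by push_cast; ring,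
      Real.rpow_neg ht.le, Real.rpow_natCast]
  have h2 : Real.exp (-t - b / t) = Real.exp (-t) * Real.exp (-(b / t)) := by
    rw [← Real.exp_add]; ring_nf
  rw [h1, h2]
  have hbt : 0 < b / t := div_pos hb ht
  have h3 : (b / t) ^ (k + 1) / ((k + 1).factorial : ℝ) ≤ Real.exp (b / t) :=
    Real.pow_div_factorial_le_exp _ hbt.le _
  have h4 : Real.exp (-(b / t)) ≤ ((b / t) ^ (k + 1) / ((k + 1).factorial : ℝ))⁻¹ := by
    rw [Real.exp_neg]
    exact inv_anti₀ (by positivity) h3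
  calc (t ^ (k + 1 : ℕ))⁻¹ * (Real.exp (-t) * Real.exp (-(b / t)))
      ≤ (t ^ (k + 1 : ℕ))⁻¹ * (Real.exp (-t) * ((b / t) ^ (k + 1) / ((k + 1).factorial : ℝ))⁻¹) := by
        gcongr
    _ = (((k + 1).factorial : ℝ) / b ^ (k + 1)) * Real.exp (-t) := by
        rw [inv_div, div_pow]
        field_simp

lemma psi_contOn (k : ℕ) (b y : ℝ) (hy : 0 ≤ y) :
    ContinuousOn (fun t : ℝ => t ^ (-(k : ℝ) - 1) * Real.exp (-t - b / t)) (Set.Ioi y) := by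
  apply ContinuousOn.mul
  · exact continuousOn_id.rpow_const fun t ht => Or.inl (ne_of_gt (lt_of_le_of_lt hy ht))
  · apply Real.continuous_exp.comp_continuousOn
    exact (continuousOn_id.neg).sub
      (continuousOn_const.div continuousOn_id fun t ht => ne_of_gt (lt_of_le_of_lt hy ht))

lemma psi_integrableOn (k : ℕ) {b y : ℝ} (hb : 0 < b) (hy : 0 ≤ y) :
    IntegrableOn (fun t : ℝ => t ^ (-(k : ℝ) - 1) * Real.exp (-t - b / t)) (Set.Ioi y) := by
  apply Integrable.mono'
    (((exp_neg_integrableOn_Ioi y one_pos)).const_mul (((k + 1).factorial : ℝ) / b ^ (k + 1)))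
  · exact (psi_contOn k b y hy).aestronglyMeasurable measurableSet_Ioi
  · filter_upwards [ae_restrict_mem measurableSet_Ioi] with t ht
    have ht0 : 0 < t := lt_of_le_of_lt hy ht
    have hψ : 0 ≤ t ^ (-(k : ℝ) - 1) * Real.exp (-t - b / t) := by positivity
    rw [Real.norm_eq_abs, abs_of_nonneg hψ]
    simpa [neg_mul, one_mul] using psi_bound k hb ht0

lemma genGamma_sub (k : ℕ) {b y₁ y₂ : ℝ} (hb : 0 < b) (hy₁ : 0 ≤ y₁) (hy : y₁ < y₂) :
    genGamma (-(k : ℝ)) y₁ b - genGamma (-(k : ℝ)) y₂ b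
      = ∫ t in Set.Ioc y₁ y₂, t ^ (-(k : ℝ) - 1) * Real.exp (-t - b / t) := by
  have hI := psi_integrableOn k hb hy₁
  have hu : Set.Ioc y₁ y₂ ∪ Set.Ioi y₂ = Set.Ioi y₁ := Set.Ioc_union_Ioi_eq_Ioi hy.le
  have h := setIntegral_union (Set.Ioc_disjoint_Ioi le_rfl) measurableSet_Ioi
    (hI.mono_set (hu ▸ Set.subset_union_left))
    (hI.mono_set (hu ▸ Set.subset_union_right))
    (f := fun t : ℝ => t ^ (-(k : ℝ) - 1) * Real.exp (-t - b / t)) (μ := volume)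
  rw [hu] at h
  rw [genGamma, genGamma, h]
  ring

lemma image_sq (c : ℝ) (hc : 0 < c) {a b : ℝ} (ha : 0 ≤ a) (hab : a < b) :
    (fun y : ℝ => y ^ 2 / (2 * c)) '' Set.Ioc a b
      = Set.Ioc (a ^ 2 / (2 * c)) (b ^ 2 / (2 * c)) := by
  ext t
  simp only [Set.mem_image, Set.mem_Ioc]
  constructor
  · rintro ⟨y, ⟨hy1, hy2⟩, rfl⟩
    have hy0 : 0 < y := lt_of_le_of_lt ha hy1
    constructor
    · have h : a ^ 2 < y ^ 2 := by nlinarith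
      exact div_lt_div_of_pos_right h (by positivity)
    · have h : y ^ 2 ≤ b ^ 2 := by nlinarith
      exact div_le_div_of_nonneg_right h (by positivity)
  · rintro ⟨ht1, ht2⟩
    have ht0 : 0 ≤ t := le_trans (by positivity) ht1.le
    have h1 : a ^ 2 < 2 * c * t := by
      rw [div_lt_iff₀ (by positivity)] at ht1
      nlinarith
    have h2 : 2 * c * t ≤ b ^ 2 := by
      rw [le_div_iff₀ (by positivity)] at ht2
      nlinarith
    have hsq := Real.sq_sqrt (by positivity : (0:ℝ) ≤ 2 * c * t)
    have hsn := Real.sqrt_nonneg (2 * c * t)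
    refine ⟨Real.sqrt (2 * c * t), ⟨?_, ?_⟩, ?_⟩
    · nlinarith [sq_nonneg (Real.sqrt (2 * c * t) - a), sq_nonneg (Real.sqrt (2 * c * t) + a)]
    · nlinarith [sq_nonneg (Real.sqrt (2 * c * t) - b), sq_nonneg (Real.sqrt (2 * c * t) + b)]
    · rw [hsq]; field_simp

lemma my_integral_tsum {f : ℕ → ℝ → ℝ} {s : Set ℝ} (hs : MeasurableSet s)
    (hmeas : ∀ k, Measurable (f k))
    (hnn : ∀ k, ∀ y ∈ s, 0 ≤ f k y)
    (hint : ∀ k, IntegrableOn (f k) s)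
    (hsum : ∀ y ∈ s, Summable (fun k => f k y)) :
    ∫ y in s, ∑' k, f k y = ∑' k, ∫ y in s, f k y := by
  set g : ℝ → ℝ := fun y => (∑' k, ENNReal.ofReal (f k y)).toReal with hg
  have hgmeas : Measurable g :=
    (ENNReal.measurable_toReal).comp
      (Measurable.ennreal_tsum fun k => (hmeas k).ennreal_ofReal)
  have hae : ∀ᵐ y ∂(volume.restrict s), (∑' k, f k y) = g y := by
    filter_upwards [ae_restrict_mem hs] with y hy
    rw [hg]
    simp only
    rw [← ENNReal.ofReal_tsum_of_nonneg (fun k => hnn k y hy) (hsum y hy),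
      ENNReal.toReal_ofReal (tsum_nonneg fun k => hnn k y hy)]
  have haeS : ∀ᵐ y ∂(volume.restrict s),
      ENNReal.ofReal (g y) = ∑' k, ENNReal.ofReal (f k y) := by
    filter_upwards [ae_restrict_mem hs] with y hy
    rw [hg]
    simp only
    rw [ENNReal.ofReal_toReal]
    rw [← ENNReal.ofReal_tsum_of_nonneg (fun k => hnn k y hy) (hsum y hy)]
    exact ENNReal.ofReal_ne_top
  have hfin : ∀ k, (∫⁻ y in s, ENNReal.ofReal (f k y)) ≠ ⊤ := by
    intro k
    have h := (hint k).2
    rw [hasFiniteIntegral_iff_norm] at h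
    refine ne_of_lt (lt_of_le_of_lt ?_ h)
    apply lintegral_mono
    intro y
    exact ENNReal.ofReal_le_ofReal (le_abs_self _)
  calc ∫ y in s, ∑' k, f k y = ∫ y in s, g y := integral_congr_ae hae
    _ = (∫⁻ y in s, ENNReal.ofReal (g y)).toReal := by
        apply integral_eq_lintegral_of_nonneg_ae
        · exact Filter.Eventually.of_forall fun y => ENNReal.toReal_nonneg
        · exact hgmeas.aestronglyMeasurable
    _ = (∫⁻ y in s, ∑' k, ENNReal.ofReal (f k y)).toReal := by rw [lintegral_congr_ae haeS]
    _ = (∑' k, ∫⁻ y in s, ENNReal.ofReal (f k y)).toReal := by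
        rw [lintegral_tsum fun k => ((hmeas k).ennreal_ofReal).aemeasurable]
    _ = ∑' k, (∫⁻ y in s, ENNReal.ofReal (f k y)).toReal := ENNReal.tsum_toReal_eq hfin
    _ = ∑' k, ∫ y in s, f k y := by
        refine tsum_congr fun k => ?_
        rw [integral_eq_lintegral_of_nonneg_ae ?_ (hmeas k).aestronglyMeasurable]
        filter_upwards [ae_restrict_mem hs] with y hy using hnn k y hy

/-- The `k`-th term of the expanded integrand. -/
noncomputable def Fterm (σ₁ σ₂ μ x : ℝ) (k : ℕ) (y : ℝ) : ℝ :=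
  ((y / σ₁ ^ 2) * Real.exp (-y ^ 2 / (2 * σ₁ ^ 2)) *
    (((x / y) / σ₂ ^ 2) * Real.exp (-((x / y) ^ 2 + μ ^ 2) / (2 * σ₂ ^ 2))) * (1 / y)) *
  ((((x / y) * μ / σ₂ ^ 2) ^ 2 / 4) ^ k / ((k.factorial : ℝ) * (k.factorial : ℝ)))

/-- The `k`-th coefficient on the right-hand side (without the `1/α` factor). -/
noncomputable def Dcoef (σ₁ σ₂ μ x : ℝ) (k : ℕ) : ℝ :=
  x * Real.exp (-μ ^ 2 / (2 * σ₂ ^ 2)) / (2 * (σ₁ * σ₂) ^ 2) *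
    ((x * μ / 2) ^ (2 * k) /
      ((k.factorial : ℝ) * (k.factorial : ℝ) * (2 * σ₂ ^ 2 * (σ₁ * σ₂) ^ 2) ^ k))

lemma Fterm_measurable (σ₁ σ₂ μ x : ℝ) (k : ℕ) : Measurable (Fterm σ₁ σ₂ μ x k) := by
  unfold Fterm
  fun_prop

lemma Fterm_nonneg (σ₁ σ₂ μ x : ℝ) (hx : 0 ≤ x) (k : ℕ) {y : ℝ} (hy : 0 < y) :
    0 ≤ Fterm σ₁ σ₂ μ x k y := by
  unfold Fterm
  have h1 : (0:ℝ) ≤ y / σ₁ ^ 2 := div_nonneg hy.le (sq_nonneg _)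
  have h2 : (0:ℝ) ≤ (x / y) / σ₂ ^ 2 := div_nonneg (div_nonneg hx hy.le) (sq_nonneg _)
  have h3 : (0:ℝ) ≤ 1 / y := by positivity
  positivity

lemma Fterm_summable (σ₁ σ₂ μ x : ℝ) (y : ℝ) :
    Summable (fun k => Fterm σ₁ σ₂ μ x k y) := by
  unfold Fterm
  apply Summable.mul_left
  set q : ℝ := ((x / y) * μ / σ₂ ^ 2) ^ 2 / 4 with hq
  have hq0 : 0 ≤ q := by positivity
  apply Summable.of_nonneg_of_le (fun k => by positivity)
    (fun k => ?_) (Real.summable_pow_div_factorial q)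
  apply div_le_div_of_nonneg_left (by positivity) (by positivity)
  exact le_mul_of_one_le_right (by positivity) (by exact_mod_cast k.factorial_pos)

section Key

variable {σ₁ σ₂ μ x m₁ m₂ : ℝ}

lemma Fterm_eq (hσ₁ : 0 < σ₁) (hσ₂ : 0 < σ₂) (hx : 0 < x)
    (hm₁ : 0 ≤ m₁) (k : ℕ) {y : ℝ} (hy : y ∈ Set.Ioc m₁ m₂) :
    Fterm σ₁ σ₂ μ x k y
      = Dcoef σ₁ σ₂ μ x k *
          (|y / σ₁ ^ 2| •
            ((y ^ 2 / (2 * σ₁ ^ 2)) ^ (-(k : ℝ) - 1) *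
              Real.exp (-(y ^ 2 / (2 * σ₁ ^ 2)) -
                (x ^ 2 / (4 * (σ₁ * σ₂) ^ 2)) / (y ^ 2 / (2 * σ₁ ^ 2))))) := by
  have hy0 : 0 < y := lt_of_le_of_lt hm₁ hy.1
  have ht0 : 0 < y ^ 2 / (2 * σ₁ ^ 2) := by positivity
  unfold Fterm Dcoef
  simp only [smul_eq_mul]
  rw [abs_of_pos (by positivity)]
  rw [show (-(k : ℝ) - 1) = -((k + 1 : ℕ) : ℝ) by push_cast; ring,
    Real.rpow_neg ht0.le, Real.rpow_natCast]
  have hexp : Real.exp (-y ^ 2 / (2 * σ₁ ^ 2)) *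
      Real.exp (-((x / y) ^ 2 + μ ^ 2) / (2 * σ₂ ^ 2))
      = Real.exp (-μ ^ 2 / (2 * σ₂ ^ 2)) *
        Real.exp (-(y ^ 2 / (2 * σ₁ ^ 2)) -
          (x ^ 2 / (4 * (σ₁ * σ₂) ^ 2)) / (y ^ 2 / (2 * σ₁ ^ 2))) := by
    rw [← Real.exp_add, ← Real.exp_add]
    congr 1
    field_simp
    ring
  have e1 : ((y / σ₁ ^ 2) * Real.exp (-y ^ 2 / (2 * σ₁ ^ 2)) *
        (((x / y) / σ₂ ^ 2) * Real.exp (-((x / y) ^ 2 + μ ^ 2) / (2 * σ₂ ^ 2))) * (1 / y)) *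
        ((((x / y) * μ / σ₂ ^ 2) ^ 2 / 4) ^ k / ((k.factorial : ℝ) * (k.factorial : ℝ)))
      = ((y / σ₁ ^ 2) * ((x / y) / σ₂ ^ 2) * (1 / y) *
          ((((x / y) * μ / σ₂ ^ 2) ^ 2 / 4) ^ k / ((k.factorial : ℝ) * (k.factorial : ℝ)))) *
        (Real.exp (-y ^ 2 / (2 * σ₁ ^ 2)) *
          Real.exp (-((x / y) ^ 2 + μ ^ 2) / (2 * σ₂ ^ 2))) := by ring
  rw [e1, hexp]
  have hfac : (0:ℝ) < (k.factorial : ℝ) := by exact_mod_cast Nat.factorial_pos k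
  rw [show (2 : ℕ) * k = k + k from two_mul k]
  field_simp
  simp only [div_pow, mul_pow, ← pow_mul]
  field_simp
  simp only [show (4:ℝ) ^ k = 2 ^ k * 2 ^ k from by rw [← mul_pow]; norm_num]
  ring

lemma key_integral (hσ₁ : 0 < σ₁) (hσ₂ : 0 < σ₂) (hx : 0 < x)
    (hm₁ : 0 ≤ m₁) (hm : m₁ < m₂) (k : ℕ) :
    ∫ y in Set.Ioc m₁ m₂, Fterm σ₁ σ₂ μ x k y
    = Dcoef σ₁ σ₂ μ x k *
      (genGamma (-(k : ℝ)) (m₁ ^ 2 / (2 * σ₁ ^ 2)) (x ^ 2 / (4 * (σ₁ * σ₂) ^ 2)) -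
        genGamma (-(k : ℝ)) (m₂ ^ 2 / (2 * σ₁ ^ 2)) (x ^ 2 / (4 * (σ₁ * σ₂) ^ 2))) := by
  have hb : 0 < x ^ 2 / (4 * (σ₁ * σ₂) ^ 2) := by positivity
  have hβ : m₁ ^ 2 / (2 * σ₁ ^ 2) < m₂ ^ 2 / (2 * σ₁ ^ 2) := by
    apply div_lt_div_of_pos_right (by nlinarith) (by positivity)
  rw [genGamma_sub k hb (by positivity) hβ]
  have himg := image_sq (σ₁ ^ 2) (by positivity) hm₁ hm
  have hder : ∀ y ∈ Set.Ioc m₁ m₂,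
      HasDerivWithinAt (fun y : ℝ => y ^ 2 / (2 * σ₁ ^ 2)) (y / σ₁ ^ 2) (Set.Ioc m₁ m₂) y := by
    intro y hy
    have h := ((hasDerivAt_pow 2 y).div_const (2 * σ₁ ^ 2)).hasDerivWithinAt
      (s := Set.Ioc m₁ m₂)
    refine h.congr_deriv ?_
    field_simp
    ring
  have hinj : Set.InjOn (fun y : ℝ => y ^ 2 / (2 * σ₁ ^ 2)) (Set.Ioc m₁ m₂) := by
    intro u hu v hv huv
    have hu0 : 0 < u := lt_of_le_of_lt hm₁ hu.1
    have hv0 : 0 < v := lt_of_le_of_lt hm₁ hv.1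
    field_simp at huv
    first
    | exact huv
    | nlinarith [huv, sq_nonneg (u - v), sq_nonneg (u + v)]
  rw [← himg, integral_image_eq_integral_abs_deriv_smul measurableSet_Ioc hder hinj,
    ← integral_const_mul]
  apply setIntegral_congr_fun measurableSet_Ioc
  intro y hy
  exact Fterm_eq hσ₁ hσ₂ hx hm₁ k hy

lemma Fterm_integrableOn (hσ₁ : 0 < σ₁) (hσ₂ : 0 < σ₂) (hx : 0 < x)
    (hm₁ : 0 ≤ m₁) (hm : m₁ < m₂) (k : ℕ) :
    IntegrableOn (Fterm σ₁ σ₂ μ x k) (Set.Ioc m₁ m₂) := by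
  have hb : 0 < x ^ 2 / (4 * (σ₁ * σ₂) ^ 2) := by positivity
  have hψ : IntegrableOn
      (fun t : ℝ => t ^ (-(k : ℝ) - 1) *
        Real.exp (-t - (x ^ 2 / (4 * (σ₁ * σ₂) ^ 2)) / t))
      (Set.Ioc (m₁ ^ 2 / (2 * σ₁ ^ 2)) (m₂ ^ 2 / (2 * σ₁ ^ 2))) :=
    (psi_integrableOn k hb (by positivity)).mono_set Set.Ioc_subset_Ioi_self
  have himg := image_sq (σ₁ ^ 2) (by positivity : (0:ℝ) < σ₁ ^ 2) hm₁ hm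
  rw [← himg] at hψ
  have hder : ∀ y ∈ Set.Ioc m₁ m₂,
      HasDerivWithinAt (fun y : ℝ => y ^ 2 / (2 * σ₁ ^ 2)) (y / σ₁ ^ 2) (Set.Ioc m₁ m₂) y := by
    intro y hy
    have h := ((hasDerivAt_pow 2 y).div_const (2 * σ₁ ^ 2)).hasDerivWithinAt
      (s := Set.Ioc m₁ m₂)
    refine h.congr_deriv ?_
    field_simp
    ring
  have hinj : Set.InjOn (fun y : ℝ => y ^ 2 / (2 * σ₁ ^ 2)) (Set.Ioc m₁ m₂) := by
    intro u hu v hv huv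
    have hu0 : 0 < u := lt_of_le_of_lt hm₁ hu.1
    have hv0 : 0 < v := lt_of_le_of_lt hm₁ hv.1
    field_simp at huv
    first
    | exact huv
    | nlinarith [huv, sq_nonneg (u - v), sq_nonneg (u + v)]
  have h2 := (integrableOn_image_iff_integrableOn_abs_deriv_smul
    measurableSet_Ioc hder hinj _).mp hψ
  have h3 : IntegrableOn
      (fun y => Dcoef σ₁ σ₂ μ x k *
        (|y / σ₁ ^ 2| •
          ((y ^ 2 / (2 * σ₁ ^ 2)) ^ (-(k : ℝ) - 1) *
            Real.exp (-(y ^ 2 / (2 * σ₁ ^ 2)) -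
              (x ^ 2 / (4 * (σ₁ * σ₂) ^ 2)) / (y ^ 2 / (2 * σ₁ ^ 2))))))
      (Set.Ioc m₁ m₂) := by
    simpa [mul_assoc, IntegrableOn] using h2.const_mul (Dcoef σ₁ σ₂ μ x k)
  exact h3.congr_fun (fun y hy => (Fterm_eq hσ₁ hσ₂ hx hm₁ k hy).symm) measurableSet_Ioc

end Key

/-- Product of a double-truncated Rayleigh r.v. (on `[m₁, m₂]`) and an independent Rician
r.v.: the Mellin-convolution density of `X = X₁X₂` equals
`(x e^{−μ²/(2σ₂²)}/(2σ²)) ∑_i [Γ(−i, β₁; x²/(4σ²)) − Γ(−i, β₂; x²/(4σ²))]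
  /(α·i!·i!·(2σ₂²σ²)^i)·(xμ/2)^{2i}` with `σ = σ₁σ₂`. -/
theorem product_truncRayleigh_rician_density (σ₁ σ₂ μ m₁ m₂ : ℝ)
    (hσ₁ : 0 < σ₁) (hσ₂ : 0 < σ₂) (hμ : 0 ≤ μ) (hm₁ : 0 ≤ m₁) (hm : m₁ < m₂) :
    ∀ x : ℝ, 0 ≤ x →
      ∫ x₁ in Set.Icc m₁ m₂,
          ((x₁ / σ₁ ^ 2) * Real.exp (-x₁ ^ 2 / (2 * σ₁ ^ 2)) /
              (Real.exp (-(m₁ ^ 2 / (2 * σ₁ ^ 2))) -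
                Real.exp (-(m₂ ^ 2 / (2 * σ₁ ^ 2))))) *
            (((x / x₁) / σ₂ ^ 2) * Real.exp (-((x / x₁) ^ 2 + μ ^ 2) / (2 * σ₂ ^ 2)) *
              besselI0 ((x / x₁) * μ / σ₂ ^ 2)) *
            (1 / x₁) =
        (x * Real.exp (-μ ^ 2 / (2 * σ₂ ^ 2)) / (2 * (σ₁ * σ₂) ^ 2)) *
          ∑' i : ℕ,
            (genGamma (-(i : ℝ)) (m₁ ^ 2 / (2 * σ₁ ^ 2)) (x ^ 2 / (4 * (σ₁ * σ₂) ^ 2)) -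
                genGamma (-(i : ℝ)) (m₂ ^ 2 / (2 * σ₁ ^ 2)) (x ^ 2 / (4 * (σ₁ * σ₂) ^ 2))) /
              ((Real.exp (-(m₁ ^ 2 / (2 * σ₁ ^ 2))) -
                  Real.exp (-(m₂ ^ 2 / (2 * σ₁ ^ 2)))) *
                (i.factorial : ℝ) * (i.factorial : ℝ) *
                (2 * σ₂ ^ 2 * (σ₁ * σ₂) ^ 2) ^ i) *
              (x * μ / 2) ^ (2 * i) := by
  intro x hx
  rcases eq_or_lt_of_le hx with rfl | hx
  · simp
  set α : ℝ := Real.exp (-(m₁ ^ 2 / (2 * σ₁ ^ 2))) - Real.exp (-(m₂ ^ 2 / (2 * σ₁ ^ 2)))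
    with hαdef
  have hα : 0 < α := by
    rw [hαdef, sub_pos]
    apply Real.exp_lt_exp.mpr
    have : m₁ ^ 2 < m₂ ^ 2 := by nlinarith
    have h2 : m₁ ^ 2 / (2 * σ₁ ^ 2) < m₂ ^ 2 / (2 * σ₁ ^ 2) :=
      div_lt_div_of_pos_right this (by positivity)
    linarith
  rw [MeasureTheory.integral_Icc_eq_integral_Ioc]
  have hpt : ∀ y : ℝ,
      ((y / σ₁ ^ 2) * Real.exp (-y ^ 2 / (2 * σ₁ ^ 2)) / α) *
        (((x / y) / σ₂ ^ 2) * Real.exp (-((x / y) ^ 2 + μ ^ 2) / (2 * σ₂ ^ 2)) *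
          besselI0 ((x / y) * μ / σ₂ ^ 2)) * (1 / y)
      = α⁻¹ * ∑' k, Fterm σ₁ σ₂ μ x k y := by
    intro y
    rw [besselI0_eq]
    simp only [Fterm]
    rw [tsum_mul_left]
    ring
  simp only [hpt]
  rw [integral_const_mul]
  rw [my_integral_tsum measurableSet_Ioc (fun k => Fterm_measurable σ₁ σ₂ μ x k)
    (fun k y hy => Fterm_nonneg σ₁ σ₂ μ x hx.le k (lt_of_le_of_lt hm₁ hy.1))
    (fun k => Fterm_integrableOn hσ₁ hσ₂ hx hm₁ hm k)
    (fun y _ => Fterm_summable σ₁ σ₂ μ x y)]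
  rw [← tsum_mul_left, ← tsum_mul_left]
  refine tsum_congr fun k => ?_
  rw [key_integral hσ₁ hσ₂ hx hm₁ hm k]
  unfold Dcoef
  have hfac : (0:ℝ) < (k.factorial : ℝ) := by exact_mod_cast Nat.factorial_pos k
  have hP : (0:ℝ) < (2 * σ₂ ^ 2 * (σ₁ * σ₂) ^ 2) ^ k := by positivity
  field_simp
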